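/- With a_{3,m} := (∑_{j=1}^{m-1} (√2 · sin(πj/m))^{-1}) − m, for every even integer m ≥ 2 one has a_{3,m+1} ≥ a_{3,m} + √2 · (1/2 − √2/2 + 1/sin(π/(m+1)) − 1/sin(π/m)). -/

import Mathlib

open Real Finset

private lemma inv_sin_term_le (m j : ℕ) (hj1 : 1 ≤ j) (hj2 : 2*j ≤ m) :
    (Real.sin (π * j / m))⁻¹ ≤ (Real.sin (π * j / (m+1)))⁻¹ := by
  have hj : (1:ℝ) ≤ j := by exact_mod_cast hj1
  have hmj : 2*(j:ℝ) ≤ m := by exact_mod_cast hj2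
  have hm : (0:ℝ) < m := by linarith
  have h1 : 0 < π * j / (m+1) := by positivity
  have h2 : π * j / ((m:ℝ)+1) ≤ π * j / m :=
    div_le_div_of_nonneg_left (by positivity) hm (by linarith)
  have h3 : π * j / (m:ℝ) ≤ π/2 := by
    rw [div_le_div_iff₀ hm (by norm_num)]
    nlinarith [pi_pos]
  have hmono : Real.sin (π * j / ((m:ℝ)+1)) ≤ Real.sin (π * j / m) :=
    Real.strictMonoOn_sin.monotoneOn ⟨by linarith, by linarith⟩ ⟨by linarith, h3⟩ h2
  have hs1 : 0 < Real.sin (π * j / ((m:ℝ)+1)) :=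
    Real.sin_pos_of_pos_of_lt_pi h1 (by linarith [pi_pos, h2.trans h3])
  gcongr

private lemma inv_sin_term_le' (l j : ℕ) (hj1 : 1 ≤ j) (hj2 : j ≤ l+2) :
    (Real.sin (π * j / (2*(l:ℝ)+4)))⁻¹ ≤ (Real.sin (π * j / (2*(l:ℝ)+4+1)))⁻¹ := by
  have := inv_sin_term_le (2*l+4) j hj1 (by omega)
  push_cast at this
  convert this using 4

theorem stmt_10 (m : ℕ) (hm : 2 ≤ m) (hme : Even m) :
    (∑ j ∈ Finset.Icc 1 m, (Real.sqrt 2 * Real.sin (π * j / (m + 1)))⁻¹) - ((m : ℝ) + 1)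
      ≥ ((∑ j ∈ Finset.Icc 1 (m - 1), (Real.sqrt 2 * Real.sin (π * j / m))⁻¹) - (m : ℝ))
        + Real.sqrt 2 * (1 / 2 - Real.sqrt 2 / 2
            + 1 / Real.sin (π / (m + 1)) - 1 / Real.sin (π / m)) := by
  obtain ⟨k, rfl⟩ := hme
  rcases Nat.lt_or_ge k 2 with hk2 | hk2
  · -- m = 2 case
    have : k = 1 := by omega
    subst this
    norm_num
    rw [show Finset.Icc 1 2 = {1, 2} from rfl, Finset.sum_insert (by norm_num), Finset.sum_singleton]
    push_cast
    rw [show π * (1:ℝ) / 3 = π/3 by ring, show π * (2:ℝ) / 3 = π - π/3 by ring,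
      Real.sin_pi_sub, Real.sin_pi_div_three]
    have h2 : Real.sqrt 2 * Real.sqrt 2 = 2 := Real.mul_self_sqrt (by norm_num)
    have h3 : Real.sqrt 3 * Real.sqrt 3 = 3 := Real.mul_self_sqrt (by norm_num)
    have p2 : (0:ℝ) < Real.sqrt 2 := by positivity
    have p3 : (0:ℝ) < Real.sqrt 3 := by positivity
    have e1 : (Real.sqrt 3 / 2)⁻¹ = 2 / Real.sqrt 3 := by rw [inv_div]
    rw [e1]
    field_simp
    rw [Real.sq_sqrt (by norm_num : (0:ℝ) ≤ 2)]
    have h6 : (Real.sqrt 2 * Real.sqrt 3) * (Real.sqrt 2 * Real.sqrt 3) = 6 := by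
      calc (Real.sqrt 2 * Real.sqrt 3) * (Real.sqrt 2 * Real.sqrt 3)
          = (Real.sqrt 2 * Real.sqrt 2) * (Real.sqrt 3 * Real.sqrt 3) := by ring
        _ = 6 := by rw [h2, h3]; norm_num
    nlinarith [h2, h3, h6, p2, p3, mul_pos p2 p3]
  · obtain ⟨l, rfl⟩ : ∃ l, k = l + 2 := ⟨k - 2, by omega⟩
    rw [show l+2+(l+2) = 2*l+4 from by omega, show 2*l+4-1 = 2*l+3 from by omega]
    push_cast
    simp only [mul_inv, one_div]
    rw [← Finset.mul_sum, ← Finset.mul_sum]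
    set f : ℕ → ℝ := fun j => (Real.sin (π * j / (2*(l:ℝ)+4+1)))⁻¹ with hf
    set g : ℕ → ℝ := fun j => (Real.sin (π * j / (2*(l:ℝ)+4)))⁻¹ with hg
    set d1 : ℝ := (Real.sin (π / (2*(l:ℝ)+4+1)))⁻¹ with hd1
    set d2 : ℝ := (Real.sin (π / (2*(l:ℝ)+4)))⁻¹ with hd2
    have key : (∑ j ∈ Icc 1 (2*l+3), g j) + 1 + 2*(d1 - d2) ≤ ∑ j ∈ Icc 1 (2*l+4), f j := by
      have hsingle : ∀ (a : ℕ) (F : ℕ → ℝ), ∑ j ∈ Ioc a (a+1), F j = F (a+1) := by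
        intro a F
        rw [Nat.Ioc_succ_singleton, Finset.sum_singleton]
      rw [show Icc 1 (2*l+3) = Ioc 0 (2*l+3) from by rw [← Finset.Icc_add_one_left_eq_Ioc]; rfl,
        show Icc 1 (2*l+4) = Ioc 0 (2*l+4) from by rw [← Finset.Icc_add_one_left_eq_Ioc]; rfl]
      have ef : ∑ j ∈ Ioc 0 (2*l+4), f j
          = f 1 + (∑ j ∈ Ioc 1 (l+1), f j) + f (l+2) + f (l+3)
            + (∑ j ∈ Ioc (l+3) (2*l+3), f j) + f (2*l+4) := by
        rw [show f 1 = ∑ j ∈ Ioc 0 (0+1), f j from (hsingle 0 f).symm,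
            show f (l+2) = ∑ j ∈ Ioc (l+1) ((l+1)+1), f j from (hsingle (l+1) f).symm,
            show f (l+3) = ∑ j ∈ Ioc (l+2) ((l+2)+1), f j from (hsingle (l+2) f).symm,
            show f (2*l+4) = ∑ j ∈ Ioc (2*l+3) ((2*l+3)+1), f j from (hsingle (2*l+3) f).symm,
            Finset.sum_Ioc_consecutive f (by omega : (0:ℕ) ≤ 0+1) (by omega : 0+1 ≤ l+1),
            Finset.sum_Ioc_consecutive f (by omega : (0:ℕ) ≤ l+1) (by omega : l+1 ≤ (l+1)+1),
            Finset.sum_Ioc_consecutive f (by omega : (0:ℕ) ≤ (l+1)+1) (by omega : (l+1)+1 ≤ (l+2)+1),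
            Finset.sum_Ioc_consecutive f (by omega : (0:ℕ) ≤ (l+2)+1) (by omega : (l+2)+1 ≤ 2*l+3),
            Finset.sum_Ioc_consecutive f (by omega : (0:ℕ) ≤ 2*l+3) (by omega : 2*l+3 ≤ (2*l+3)+1)]
      have eg : ∑ j ∈ Ioc 0 (2*l+3), g j
          = g 1 + (∑ j ∈ Ioc 1 (l+1), g j) + g (l+2)
            + (∑ j ∈ Ioc (l+2) (2*l+2), g j) + g (2*l+3) := by
        rw [show g 1 = ∑ j ∈ Ioc 0 (0+1), g j from (hsingle 0 g).symm,
            show g (l+2) = ∑ j ∈ Ioc (l+1) ((l+1)+1), g j from (hsingle (l+1) g).symm,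
            show g (2*l+3) = ∑ j ∈ Ioc (2*l+2) ((2*l+2)+1), g j from (hsingle (2*l+2) g).symm,
            Finset.sum_Ioc_consecutive g (by omega : (0:ℕ) ≤ 0+1) (by omega : 0+1 ≤ l+1),
            Finset.sum_Ioc_consecutive g (by omega : (0:ℕ) ≤ l+1) (by omega : l+1 ≤ (l+1)+1),
            Finset.sum_Ioc_consecutive g (by omega : (0:ℕ) ≤ (l+1)+1) (by omega : (l+1)+1 ≤ 2*l+2),
            Finset.sum_Ioc_consecutive g (by omega : (0:ℕ) ≤ 2*l+2) (by omega : 2*l+2 ≤ (2*l+2)+1)]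
      have comp1 : ∑ j ∈ Ioc 1 (l+1), g j ≤ ∑ j ∈ Ioc 1 (l+1), f j := by
        apply Finset.sum_le_sum
        intro j hj
        rw [Finset.mem_Ioc] at hj
        exact inv_sin_term_le' l j (by omega) (by omega)
      have comp2 : ∑ j ∈ Ioc (l+2) (2*l+2), g j ≤ ∑ j ∈ Ioc (l+3) (2*l+3), f j := by
        rw [show ∑ j ∈ Ioc (l+3) (2*l+3), f j = ∑ j ∈ Ioc (l+2) (2*l+2), f (j+1) from by
          rw [show l+3 = (l+2)+1 from rfl, show 2*l+3 = (2*l+2)+1 from rfl,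
            ← Finset.map_add_right_Ioc, Finset.sum_map]
          rfl]
        apply Finset.sum_le_sum
        intro j hj
        rw [Finset.mem_Ioc] at hj
        set i := 2*l+4 - j with hi
        have hij : (i:ℝ) + j = 2*(l:ℝ)+4 := by
          have : i + j = 2*l+4 := by omega
          exact_mod_cast congrArg (Nat.cast : ℕ → ℝ) this
        have hD : (2*(l:ℝ)+4) ≠ 0 := by positivity
        have hD1 : (2*(l:ℝ)+4+1) ≠ 0 := by positivity
        have hgj : g j = (Real.sin (π * i / (2*(l:ℝ)+4)))⁻¹ := by
          simp only [hg]
          rw [show π * (j:ℝ) / (2*(l:ℝ)+4) = π - π * (i:ℝ) / (2*(l:ℝ)+4) from by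
            rw [eq_sub_iff_add_eq, ← add_div, ← mul_add]
            rw [show (j:ℝ) + i = 2*(l:ℝ)+4 from by linarith]
            exact mul_div_cancel_right₀ π hD, Real.sin_pi_sub]
        have hfj : f (j+1) = (Real.sin (π * i / (2*(l:ℝ)+4+1)))⁻¹ := by
          simp only [hf]
          push_cast
          rw [show π * ((j:ℝ)+1) / (2*(l:ℝ)+4+1) = π - π * (i:ℝ) / (2*(l:ℝ)+4+1) from by
            rw [eq_sub_iff_add_eq, ← add_div, ← mul_add]
            rw [show (j:ℝ) + 1 + i = 2*(l:ℝ)+4+1 from by linarith]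
            exact mul_div_cancel_right₀ π hD1, Real.sin_pi_sub]
        rw [hgj, hfj]
        exact inv_sin_term_le' l i (by omega) (by omega)
      have hf1 : f 1 = d1 := by simp [hf, hd1]
      have hg1 : g 1 = d2 := by simp [hg, hd2]
      have hflast : f (2*l+4) = d1 := by
        simp only [hf, hd1]
        push_cast
        rw [show π * (2*(l:ℝ)+4) / (2*(l:ℝ)+4+1) = π - π / (2*(l:ℝ)+4+1) from by
          have hD : (2*(l:ℝ)+4+1) ≠ 0 := by positivity
          field_simp
          ring, Real.sin_pi_sub]
      have hglast : g (2*l+3) = d2 := by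
        simp only [hg, hd2]
        push_cast
        rw [show π * (2*(l:ℝ)+3) / (2*(l:ℝ)+4) = π - π / (2*(l:ℝ)+4) from by
          have hD : (2*(l:ℝ)+4) ≠ 0 := by positivity
          field_simp
          ring, Real.sin_pi_sub]
      have hgmid : g (l+2) = 1 := by
        simp only [hg]
        push_cast
        rw [show π * ((l:ℝ)+2) / (2*(l:ℝ)+4) = π/2 from by
          rw [div_eq_div_iff (by positivity) (by norm_num)]
          ring, Real.sin_pi_div_two, inv_one]
      have hfmid : ∀ a : ℕ, 1 ≤ a → a ≤ 2*l+4 → 1 ≤ f a := by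
        intro a ha1 ha2
        have ha1' : (1:ℝ) ≤ a := by exact_mod_cast ha1
        have ha2' : (a:ℝ) ≤ 2*(l:ℝ)+4 := by exact_mod_cast ha2
        have hpos : 0 < Real.sin (π * a / (2*(l:ℝ)+4+1)) := by
          apply Real.sin_pos_of_pos_of_lt_pi
          · positivity
          · rw [div_lt_iff₀ (by positivity)]
            nlinarith [pi_pos]
        simp only [hf]
        exact (one_le_inv₀ hpos).mpr (Real.sin_le_one _)
      have hm1 := hfmid (l+2) (by omega) (by omega)
      have hm2 := hfmid (l+3) (by omega) (by omega)
      rw [ef, eg]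
      linarith [comp1, comp2]
    have hne : Real.sqrt 2 ≠ 0 := by positivity
    have h2 : Real.sqrt 2 * Real.sqrt 2 = 2 := Real.mul_self_sqrt (by norm_num)
    have hinv : (Real.sqrt 2)⁻¹ = Real.sqrt 2 / 2 := by
      rw [inv_eq_one_div, div_eq_div_iff hne (by norm_num)]
      linarith [h2]
    have hmul := mul_le_mul_of_nonneg_left key (by positivity : (0:ℝ) ≤ (Real.sqrt 2)⁻¹)
    rw [hinv] at hmul ⊢
    nlinarith [hmul, h2]
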